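/- Let p be a prime, n ≥ 1, let A ⊆ (ZMod p)^n, and let v ∈ (ZMod p)^n be nonzero. Then |C_v(A) + C_v(A)| ≤ |A + A|. -/

import Mathlib

open Pointwise

/-- `u ≺ v` in the lexicographic order: `u i < v i` (as values in `{0,…,p-1}`)
at the largest coordinate `i` where `u` and `v` differ. -/
def lexLt {n p : ℕ} (u v : Fin n → ZMod p) : Prop :=
  ∃ i : Fin n, (u i).val < (v i).val ∧ ∀ j : Fin n, i < j → u j = v j

/-- The `v`-line through `u`: `L_v^u = {u + k•v : k ∈ ZMod p}`. -/
def line {n p : ℕ} (v u : Fin n → ZMod p) : Set (Fin n → ZMod p) :=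
  {x | ∃ k : ZMod p, x = u + k • v}

/-- `IS k L`: the set of the `k` lexicographically smallest elements of `L`. -/
def IS {n p : ℕ} (k : ℕ) (L : Set (Fin n → ZMod p)) : Set (Fin n → ZMod p) :=
  {x | x ∈ L ∧ ({y | y ∈ L ∧ lexLt y x}).ncard < k}

/-- The `v`-compression of `A`: on each `v`-line `L`, replace `A ∩ L` by the
initial segment of `L` of the same cardinality. -/
def comp {n p : ℕ} (v : Fin n → ZMod p) (A : Set (Fin n → ZMod p)) :
    Set (Fin n → ZMod p) :=
  ⋃ u : Fin n → ZMod p, IS (A ∩ line v u).ncard (line v u)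

/-- `E = {0, e₁, …, e_n}`: zero together with the standard basis. -/
def stdE (n p : ℕ) : Set (Fin n → ZMod p) :=
  {0} ∪ Set.range (fun i : Fin n => Pi.single i (1 : ZMod p))

/-- `A` is `𝓔`-compressed: `E ⊆ A` and `A` is `v`-compressed for every nonzero `v`
whose compression keeps `E` inside the set. -/
def ECompressed {n p : ℕ} (A : Set (Fin n → ZMod p)) : Prop :=
  stdE n p ⊆ A ∧
    ∀ v : Fin n → ZMod p, v ≠ 0 → stdE n p ⊆ comp v A → comp v A = A

section Aux

variable {p n : ℕ} {v : Fin n → ZMod p} {i : Fin n}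

lemma mem_line_self (v u : Fin n → ZMod p) : u ∈ line v u := ⟨0, by simp⟩

lemma line_eq_of_mem {u x : Fin n → ZMod p} (h : x ∈ line v u) : line v x = line v u := by
  obtain ⟨k, rfl⟩ := h
  ext y
  constructor
  · rintro ⟨k', rfl⟩
    exact ⟨k + k', by rw [add_smul]; abel⟩
  · rintro ⟨k', rfl⟩
    exact ⟨k' - k, by rw [sub_smul]; abel⟩

lemma add_mem_line {u₁ u₂ x y : Fin n → ZMod p} (hx : x ∈ line v u₁) (hy : y ∈ line v u₂) :
    x + y ∈ line v (u₁ + u₂) := by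
  obtain ⟨k, rfl⟩ := hx
  obtain ⟨k', rfl⟩ := hy
  exact ⟨k + k', by rw [add_smul]; abel⟩

lemma eval_injOn_line (hp : p.Prime) (hvi : v i ≠ 0) (u : Fin n → ZMod p) :
    Set.InjOn (fun x => x i) (line v u) := by
  haveI := Fact.mk hp
  rintro x ⟨k, rfl⟩ y ⟨k', rfl⟩ h
  simp only [Pi.add_apply, Pi.smul_apply, smul_eq_mul, add_right_inj] at h
  rw [mul_right_cancel₀ hvi h]

lemma eval_surj_line (hp : p.Prime) (hvi : v i ≠ 0) (u : Fin n → ZMod p) (t : ZMod p) :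
    ∃ x ∈ line v u, x i = t := by
  haveI := Fact.mk hp
  refine ⟨u + ((t - u i) * (v i)⁻¹) • v, ⟨_, rfl⟩, ?_⟩
  simp only [Pi.add_apply, Pi.smul_apply, smul_eq_mul]
  field_simp
  ring

lemma lexLt_line (hp : p.Prime) (hvi : v i ≠ 0) (hmax : ∀ j, i < j → v j = 0)
    {u x y : Fin n → ZMod p} (hx : x ∈ line v u) (hy : y ∈ line v u) :
    lexLt y x ↔ (y i).val < (x i).val := by
  haveI := Fact.mk hp
  obtain ⟨k, rfl⟩ := hx
  obtain ⟨k', rfl⟩ := hy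
  constructor
  · rintro ⟨j, hlt, hagree⟩
    rcases lt_trichotomy j i with hji | rfl | hij
    · exfalso
      have hi := hagree i hji
      simp only [Pi.add_apply, Pi.smul_apply, smul_eq_mul, add_right_inj] at hi
      have : k' = k := mul_right_cancel₀ hvi hi
      subst this
      exact lt_irrefl _ hlt
    · exact hlt
    · exfalso
      have : v j = 0 := hmax j hij
      simp only [Pi.add_apply, Pi.smul_apply, smul_eq_mul, this, mul_zero, add_zero] at hlt
      exact lt_irrefl _ hlt
  · intro h
    refine ⟨i, h, fun j hj => ?_⟩
    simp [hmax j hj]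

lemma ncard_val_lt (hp : p.Prime) (s : ℕ) :
    {t : ZMod p | t.val < s}.ncard = min s p := by
  haveI := Fact.mk hp
  haveI : NeZero p := ⟨hp.ne_zero⟩
  have himg : ZMod.val '' {t : ZMod p | t.val < s} = Set.Iio (min s p) := by
    ext j
    simp only [Set.mem_image, Set.mem_setOf_eq, Set.mem_Iio, lt_min_iff]
    constructor
    · rintro ⟨t, ht, rfl⟩
      exact ⟨ht, ZMod.val_lt t⟩
    · rintro ⟨hjs, hjp⟩
      exact ⟨(j : ZMod p), by rwa [ZMod.val_cast_of_lt hjp], ZMod.val_cast_of_lt hjp⟩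
  have := Set.ncard_image_of_injective {t : ZMod p | t.val < s} (ZMod.val_injective p)
  rw [himg] at this
  rw [← this, ← Finset.coe_range, Set.ncard_coe_finset, Finset.card_range]

lemma ncard_lexLt_line (hp : p.Prime) (hvi : v i ≠ 0) (hmax : ∀ j, i < j → v j = 0)
    {u x : Fin n → ZMod p} (hx : x ∈ line v u) :
    {y | y ∈ line v u ∧ lexLt y x}.ncard = (x i).val := by
  haveI := Fact.mk hp
  haveI : NeZero p := ⟨hp.ne_zero⟩
  have hset : {y | y ∈ line v u ∧ lexLt y x} = {y ∈ line v u | (y i).val < (x i).val} := by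
    ext y
    exact and_congr_right fun hy => lexLt_line hp hvi hmax hx hy
  rw [hset]
  have himg : (fun y => y i) '' {y ∈ line v u | (y i).val < (x i).val}
      = {t : ZMod p | t.val < (x i).val} := by
    ext t
    constructor
    · rintro ⟨y, ⟨_, hlt⟩, rfl⟩
      exact hlt
    · intro ht
      obtain ⟨y, hyL, hyt⟩ := eval_surj_line hp hvi u t
      exact ⟨y, ⟨hyL, by rwa [hyt]⟩, hyt⟩
  have hinj : Set.InjOn (fun y => y i) {y ∈ line v u | (y i).val < (x i).val} :=
    (eval_injOn_line hp hvi u).mono (Set.sep_subset _ _)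
  rw [← Set.ncard_image_of_injOn hinj, himg, ncard_val_lt hp,
    min_eq_left (ZMod.val_lt (x i)).le]

lemma comp_eq (hp : p.Prime) (hvi : v i ≠ 0) (hmax : ∀ j, i < j → v j = 0)
    (A : Set (Fin n → ZMod p)) :
    comp v A = {x | (x i).val < (A ∩ line v x).ncard} := by
  ext x
  simp only [comp, Set.mem_iUnion, IS, Set.mem_setOf_eq]
  constructor
  · rintro ⟨u, hxL, hcard⟩
    rwa [ncard_lexLt_line hp hvi hmax hxL, ← line_eq_of_mem hxL] at hcard
  · intro h
    exact ⟨x, mem_line_self v x, by rwa [ncard_lexLt_line hp hvi hmax (mem_line_self v x)]⟩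

lemma key_line (hp : p.Prime) (hvi : v i ≠ 0) (hmax : ∀ j, i < j → v j = 0)
    (A : Set (Fin n → ZMod p)) (w : Fin n → ZMod p) :
    ((comp v A + comp v A) ∩ line v w).ncard ≤ ((A + A) ∩ line v w).ncard := by
  classical
  haveI := Fact.mk hp
  haveI : NeZero p := ⟨hp.ne_zero⟩
  rcases Set.eq_empty_or_nonempty ((comp v A + comp v A) ∩ line v w) with hE | ⟨x₀, hx₀⟩
  · simp [hE]
  set m : (Fin n → ZMod p) → ℕ := fun u => (A ∩ line v u).ncard with hm
  have hcomp := comp_eq hp hvi hmax A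
  -- membership in comp gives m ≥ 1 and val bound
  have hcm : ∀ a ∈ comp v A, (a i).val < m a ∧ 1 ≤ m a := by
    intro a ha
    rw [hcomp, Set.mem_setOf_eq] at ha
    have h : (a i).val < m a := by rw [hm]; exact ha
    exact ⟨h, by omega⟩
  set pairs : Finset ((Fin n → ZMod p) × (Fin n → ZMod p)) :=
    Finset.univ.filter (fun q => q.1 + q.2 ∈ line v w ∧ 1 ≤ m q.1 ∧ 1 ≤ m q.2) with hpairs
  have hmem_pairs : ∀ a b, a ∈ comp v A → b ∈ comp v A → a + b ∈ line v w →
      (a, b) ∈ pairs := by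
    intro a b ha hb hab
    simp only [hpairs, Finset.mem_filter, Finset.mem_univ, true_and]
    exact ⟨hab, (hcm a ha).2, (hcm b hb).2⟩
  have hne : pairs.Nonempty := by
    obtain ⟨⟨a, ha, b, hb, rfl⟩, hline⟩ := hx₀
    exact ⟨(a, b), hmem_pairs a b ha hb hline⟩
  obtain ⟨q, hq, hqmax⟩ := pairs.exists_max_image (fun q => min p (m q.1 + m q.2 - 1)) hne
  set s : ℕ := min p (m q.1 + m q.2 - 1) with hs
  -- Step 1: the sumset ∩ line is inside the val-initial segment of size s
  have hsub : (comp v A + comp v A) ∩ line v w ⊆ {x ∈ line v w | (x i).val < s} := by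
    rintro x ⟨⟨a, ha, b, hb, rfl⟩, hline⟩
    refine ⟨hline, ?_⟩
    have hpq : min p (m a + m b - 1) ≤ s := by
      simpa using hqmax (a, b) (hmem_pairs a b ha hb hline)
    have h1 := (hcm a ha).1
    have h2 := (hcm b hb).1
    have h3 : ((a + b) i).val ≤ (a i).val + (b i).val := ZMod.val_add_le (a i) (b i)
    have h4 : ((a + b) i).val < p := ZMod.val_lt _
    show ((a + b) i).val < s
    omega
  -- Step 2: the initial segment has at most s elements
  have hcard1 : ((comp v A + comp v A) ∩ line v w).ncard
      ≤ {x ∈ line v w | (x i).val < s}.ncard :=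
    Set.ncard_le_ncard hsub (Set.toFinite _)
  have hcard2 : {x ∈ line v w | (x i).val < s}.ncard ≤ s := by
    have hinj : Set.InjOn (fun y => y i) {x ∈ line v w | (x i).val < s} :=
      (eval_injOn_line hp hvi w).mono (Set.sep_subset _ _)
    rw [← Set.ncard_image_of_injOn hinj]
    calc ((fun y => y i) '' {x ∈ line v w | (x i).val < s}).ncard
        ≤ {t : ZMod p | t.val < s}.ncard := by
          apply Set.ncard_le_ncard _ (Set.toFinite _)
          rintro t ⟨y, ⟨_, hlt⟩, rfl⟩
          exact hlt
      _ ≤ s := by rw [ncard_val_lt hp]; exact min_le_left _ _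
  -- Step 3: s ≤ |(A+A) ∩ line v w| via Cauchy-Davenport
  rw [hpairs] at hq
  rw [Finset.mem_filter] at hq
  obtain ⟨-, hqline, hq1, hq2⟩ := hq
  set F₁ : Finset (Fin n → ZMod p) := (Set.toFinite (A ∩ line v q.1)).toFinset with hF₁
  set F₂ : Finset (Fin n → ZMod p) := (Set.toFinite (A ∩ line v q.2)).toFinset with hF₂
  set B₁ : Finset (ZMod p) := F₁.image (fun x => x i) with hB₁
  set B₂ : Finset (ZMod p) := F₂.image (fun x => x i) with hB₂
  have hinj₁ : Set.InjOn (fun x : Fin n → ZMod p => x i) ↑F₁ := by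
    rw [hF₁, Set.Finite.coe_toFinset]
    exact (eval_injOn_line hp hvi q.1).mono Set.inter_subset_right
  have hinj₂ : Set.InjOn (fun x : Fin n → ZMod p => x i) ↑F₂ := by
    rw [hF₂, Set.Finite.coe_toFinset]
    exact (eval_injOn_line hp hvi q.2).mono Set.inter_subset_right
  have hcardB₁ : B₁.card = m q.1 := by
    rw [hB₁, Finset.card_image_of_injOn hinj₁, hF₁, hm]
    exact (Set.ncard_eq_toFinset_card _ _).symm
  have hcardB₂ : B₂.card = m q.2 := by
    rw [hB₂, Finset.card_image_of_injOn hinj₂, hF₂, hm]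
    exact (Set.ncard_eq_toFinset_card _ _).symm
  have hne₁ : B₁.Nonempty := by
    rw [← Finset.card_pos, hcardB₁]; exact hq1
  have hne₂ : B₂.Nonempty := by
    rw [← Finset.card_pos, hcardB₂]; exact hq2
  have hCD := ZMod.cauchy_davenport hp hne₁ hne₂
  rw [hcardB₁, hcardB₂] at hCD
  -- B₁ + B₂ is the image of F₁ + F₂
  have himgsum : B₁ + B₂ = (F₁ + F₂).image (fun x => x i) := by
    ext t
    simp only [Finset.mem_add, hB₁, hB₂, Finset.mem_image]
    constructor
    · rintro ⟨t₁, ⟨x, hx, rfl⟩, t₂, ⟨y, hy, rfl⟩, rfl⟩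
      exact ⟨x + y, ⟨x, hx, y, hy, rfl⟩, rfl⟩
    · rintro ⟨z, ⟨x, hx, y, hy, rfl⟩, rfl⟩
      exact ⟨x i, ⟨x, hx, rfl⟩, y i, ⟨y, hy, rfl⟩, rfl⟩
  have hstep3 : s ≤ ((A + A) ∩ line v w).ncard := by
    calc s ≤ (B₁ + B₂).card := hCD
      _ ≤ (F₁ + F₂).card := by rw [himgsum]; exact Finset.card_image_le
      _ ≤ ((A + A) ∩ line v w).ncard := by
          rw [Set.ncard_eq_toFinset_card _ (Set.toFinite _)]
          apply Finset.card_le_card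
          intro x hx
          rw [Finset.mem_add] at hx
          obtain ⟨a, ha, b, hb, rfl⟩ := hx
          rw [hF₁, Set.Finite.mem_toFinset] at ha
          rw [hF₂, Set.Finite.mem_toFinset] at hb
          rw [Set.Finite.mem_toFinset]
          refine ⟨⟨a, ha.1, b, hb.1, rfl⟩, ?_⟩
          have := add_mem_line ha.2 hb.2
          rwa [line_eq_of_mem hqline] at this
  exact hcard1.trans (hcard2.trans hstep3)

end Aux


theorem statement5 (p n : ℕ) (hp : p.Prime) (hn : 1 ≤ n)
    (A : Set (Fin n → ZMod p)) (v : Fin n → ZMod p) (hv : v ≠ 0) :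
    (comp v A + comp v A).ncard ≤ (A + A).ncard := by
  classical
  haveI := Fact.mk hp
  haveI : NeZero p := ⟨hp.ne_zero⟩
  -- find the largest coordinate where v is nonzero
  set sfin : Finset (Fin n) := Finset.univ.filter (fun j => v j ≠ 0) with hsfin
  have hsne : sfin.Nonempty := by
    by_contra h
    apply hv
    funext j
    simp only [Pi.zero_apply]
    by_contra hj
    exact h ⟨j, by simp [hsfin, hj]⟩
  set i : Fin n := sfin.max' hsne with hi
  have hvi : v i ≠ 0 := by
    have := sfin.max'_mem hsne
    simpa [hsfin] using this
  have hmax : ∀ j, i < j → v j = 0 := by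
    intro j hj
    by_contra hjv
    exact absurd (sfin.le_max' j (by simp [hsfin, hjv])) (not_le.2 hj)
  -- the representative of a line
  set rep : (Fin n → ZMod p) → (Fin n → ZMod p) :=
    fun x => x - ((x i) * (v i)⁻¹) • v with hrepdef
  have hrep_mem : ∀ x, x ∈ line v (rep x) := by
    intro x
    exact ⟨(x i) * (v i)⁻¹, by simp [hrepdef]⟩
  have hrep_line : ∀ x y, y ∈ line v x → rep y = rep x := by
    rintro x y ⟨k, rfl⟩
    funext j
    simp only [hrepdef, Pi.sub_apply, Pi.smul_apply, Pi.add_apply, smul_eq_mul]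
    have h1 : v i * (v i)⁻¹ = 1 := mul_inv_cancel₀ hvi
    field_simp
    ring
  have hfiber : ∀ x₀, {x | rep x = rep x₀} = line v x₀ := by
    intro x₀
    ext x
    constructor
    · intro h
      have h1 : x ∈ line v (rep x₀) := h ▸ hrep_mem x
      rwa [← line_eq_of_mem (hrep_mem x₀)] at h1
    · intro h
      exact hrep_line x₀ x h
  -- sum over fibers of rep
  rw [Set.ncard_eq_toFinset_card _ (Set.toFinite (comp v A + comp v A)),
    Set.ncard_eq_toFinset_card _ (Set.toFinite (A + A))]
  rw [Finset.card_eq_sum_card_fiberwise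
      (f := rep) (t := Finset.univ) (fun x _ => Finset.mem_univ _),
    Finset.card_eq_sum_card_fiberwise
      (f := rep) (t := Finset.univ) (fun x _ => Finset.mem_univ _)]
  apply Finset.sum_le_sum
  intro w _
  by_cases hw : ∃ x₀, rep x₀ = w
  · obtain ⟨x₀, rfl⟩ := hw
    have e1 : ∀ (S : Set (Fin n → ZMod p)),
        ((Set.toFinite S).toFinset.filter (fun x => rep x = rep x₀)).card
          = (S ∩ line v x₀).ncard := by
      intro S
      rw [Set.ncard_eq_toFinset_card _ (Set.toFinite _)]
      congr 1
      ext x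
      simp only [Finset.mem_filter, Set.Finite.mem_toFinset, Set.mem_inter_iff]
      rw [← hfiber x₀]
      rfl
    rw [e1, e1]
    exact key_line hp hvi hmax A x₀
  · have e2 : ∀ (S : Set (Fin n → ZMod p)),
        (Set.toFinite S).toFinset.filter (fun x => rep x = w) = ∅ := by
      intro S
      apply Finset.filter_false_of_mem
      intro x _ h
      exact hw ⟨x, h⟩
    rw [e2, e2]
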